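/- For τ_PF ∈ (0,1) and y > 0, the map D ↦ (1/D)·ln(1 + (1 − τ_PF)·(e^{yD} − 1)) is strictly increasing in D on (0, ∞). -/

import Mathlib

private lemma aux_strictConvex (c : ℝ) (hc0 : 0 < c) (hc1 : c < 1) :
    StrictConvexOn ℝ Set.univ (fun x : ℝ => Real.log (c * Real.exp x + (1 - c))) := by
  have hpos : ∀ x : ℝ, 0 < c * Real.exp x + (1 - c) := fun x => by
    have := Real.exp_pos x; nlinarith
  have hd1 : ∀ x : ℝ, HasDerivAt (fun x : ℝ => Real.log (c * Real.exp x + (1 - c)))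
      (c * Real.exp x / (c * Real.exp x + (1 - c))) x := by
    intro x
    have h1 : HasDerivAt (fun x : ℝ => c * Real.exp x + (1 - c)) (c * Real.exp x) x :=
      ((Real.hasDerivAt_exp x).const_mul c).add_const _
    exact h1.log (ne_of_gt (hpos x))
  have hd2 : ∀ x : ℝ, HasDerivAt (fun x : ℝ => c * Real.exp x / (c * Real.exp x + (1 - c)))
      (c * Real.exp x * (1 - c) / (c * Real.exp x + (1 - c)) ^ 2) x := by
    intro x
    have h1 : HasDerivAt (fun x : ℝ => c * Real.exp x) (c * Real.exp x) x :=
      (Real.hasDerivAt_exp x).const_mul c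
    have h2 : HasDerivAt (fun x : ℝ => c * Real.exp x + (1 - c)) (c * Real.exp x) x :=
      h1.add_const _
    have := h1.div h2 (ne_of_gt (hpos x))
    exact this.congr_deriv (by ring)
  apply strictConvexOn_of_deriv2_pos convex_univ
  · exact (((continuous_const.mul Real.continuous_exp).add continuous_const).log
      (fun x => ne_of_gt (hpos x))).continuousOn
  · intro x _
    have e1 : deriv (fun x : ℝ => Real.log (c * Real.exp x + (1 - c)))
        = fun x => c * Real.exp x / (c * Real.exp x + (1 - c)) :=
      funext fun x => (hd1 x).deriv
    rw [show (deriv^[2] (fun x : ℝ => Real.log (c * Real.exp x + (1 - c))))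
        = deriv (deriv (fun x : ℝ => Real.log (c * Real.exp x + (1 - c)))) from rfl, e1,
      (hd2 x).deriv]
    exact div_pos (mul_pos (mul_pos hc0 (Real.exp_pos x)) (by linarith : (0:ℝ) < 1 - c)) (pow_pos (hpos x) 2)

/-- The exact finite-horizon after-tax yield is strictly increasing
in the holding period D on (0, ∞). -/
theorem after_tax_yield_strictMono (τPF y : ℝ) (hτ : τPF ∈ Set.Ioo (0:ℝ) 1)
    (hy : 0 < y) :
    StrictMonoOn
      (fun D : ℝ => (1 / D) * Real.log (1 + (1 - τPF) * (Real.exp (y * D) - 1)))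
      (Set.Ioi (0:ℝ)) := by
  obtain ⟨hτ0, hτ1⟩ := hτ
  set c := 1 - τPF with hc
  have hc0 : 0 < c := by simp [hc]; linarith
  have hc1 : c < 1 := by simp [hc]; linarith
  have hconv := aux_strictConvex c hc0 hc1
  intro a ha b hb hab
  simp only [Set.mem_Ioi] at ha hb
  have ha' : 0 < y * a := by positivity
  have hb' : 0 < y * b := by positivity
  have hab' : y * a < y * b := by nlinarith
  -- chord inequality from strict convexity: g(ya) < (a/b) g(yb)
  set g : ℝ → ℝ := fun x => Real.log (c * Real.exp x + (1 - c)) with hg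
  have hg0 : g 0 = 0 := by simp [hg]
  have ht0 : (0:ℝ) < a / b := by positivity
  have ht1 : a / b < 1 := (div_lt_one hb).2 hab
  have key : g (y * a) < (a / b) * g (y * b) := by
    have := hconv.2 (Set.mem_univ 0) (Set.mem_univ (y * b))
      (ne_of_lt hb') (by linarith : (0:ℝ) < 1 - a / b) ht0 (by ring)
    have hcomb : (1 - a / b) • (0:ℝ) + (a / b) • (y * b) = y * a := by
      field_simp
      simp only [smul_eq_mul, mul_zero, zero_add]
      rw [div_mul_eq_mul_div, mul_left_comm, mul_div_cancel_left₀ _ hb.ne']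
    rw [hcomb, hg0] at this
    simpa using this
  have hrw : ∀ x : ℝ, 1 + c * (Real.exp x - 1) = c * Real.exp x + (1 - c) := by
    intro x; ring
  simp only [hrw]
  show (1 / a) * g (y * a) < (1 / b) * g (y * b)
  rw [div_mul_eq_mul_div, div_mul_eq_mul_div, div_lt_div_iff₀ ha hb]
  calc 1 * g (y * a) * b = b * g (y * a) := by ring
    _ < b * ((a / b) * g (y * b)) := by
        exact (mul_lt_mul_iff_right₀ hb).2 key
    _ = 1 * g (y * b) * a := by field_simp
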